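/- Let 0 < p₀ < ln 2, ρ = ρ_st the solution of p₀ = ρ/(2 - e^ρ), and Qⁿ_st = (2(1-e^{-ρ}))ⁿ·ρe^{-ρ}/p₀. Then the sequence (Qⁿ_st) is the unique probability distribution (Qⁿ)_{n≥0} on ℕ with all Qⁿ ≥ 0 and ∑ Qⁿ = 1 satisfying the stationary equations: for all n ≥ 1, 2^{1-n}·p₀·Q^{n-1}·(1 - e^{-ρ̄}) = 2^{-n}·p₀·Qⁿ, and ρ̄·e^{-ρ̄} = p₀·Q⁰, where ρ̄ = ∑_{i=0}^∞ 2^{-i}·p₀·Q^i. -/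

import Mathlib

open Real

/-- The stationary equations of the mean-field ODE system for exponential back-off. -/
def StationaryEqs (p₀ : ℝ) (Q : ℕ → ℝ) : Prop :=
  (∀ n : ℕ, 1 ≤ n →
      (2:ℝ)^((1:ℤ) - n) * p₀ * Q (n-1) * (1 - Real.exp (-(∑' i : ℕ, (2:ℝ)^(-(i:ℤ)) * p₀ * Q i)))
        = (2:ℝ)^(-(n:ℤ)) * p₀ * Q n) ∧
  (∑' i : ℕ, (2:ℝ)^(-(i:ℤ)) * p₀ * Q i) *
      Real.exp (-(∑' i : ℕ, (2:ℝ)^(-(i:ℤ)) * p₀ * Q i)) = p₀ * Q 0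

theorem expBackoff_stationary_unique
    (p₀ ρ : ℝ) (hp₀ : 0 < p₀) (hp₀' : p₀ < Real.log 2)
    (hρ : ρ ∈ Set.Ioo (0:ℝ) (Real.log 2))
    (hfix : p₀ = ρ / (2 - Real.exp ρ))
    (Qst : ℕ → ℝ)
    (hQst : ∀ n, Qst n = (2 * (1 - Real.exp (-ρ)))^n * (ρ * Real.exp (-ρ) / p₀)) :
    ((∀ n, 0 ≤ Qst n) ∧ HasSum Qst 1 ∧ StationaryEqs p₀ Qst) ∧
    ∀ Q : ℕ → ℝ, (∀ n, 0 ≤ Q n) → HasSum Q 1 → StationaryEqs p₀ Q → Q = Qst := by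
  obtain ⟨hρ0, hρ2⟩ := hρ
  have hs0 : 0 < Real.exp (-ρ) := Real.exp_pos _
  have hs1 : Real.exp (-ρ) < 1 := Real.exp_lt_one_iff.2 (by linarith)
  have hee : Real.exp ρ * Real.exp (-ρ) = 1 := by
    rw [← Real.exp_add, add_neg_cancel, Real.exp_zero]
  have heρ : Real.exp ρ < 2 := by
    calc Real.exp ρ < Real.exp (Real.log 2) := Real.exp_lt_exp.2 hρ2
    _ = 2 := Real.exp_log (by norm_num)
  have hs2 : 1/2 < Real.exp (-ρ) := by nlinarith
  have h2e : 0 < 2 - Real.exp ρ := by linarith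
  have hp : p₀ * (2 - Real.exp ρ) = ρ := by rw [hfix]; field_simp
  have hc : ρ * Real.exp (-ρ) / p₀ = 2 * Real.exp (-ρ) - 1 := by
    rw [div_eq_iff hp₀.ne']
    linear_combination (-Real.exp (-ρ)) * hp - p₀ * hee
  have hgeo : HasSum (fun i : ℕ => (1 - Real.exp (-ρ))^i) (Real.exp (-ρ))⁻¹ := by
    have := hasSum_geometric_of_lt_one (r := 1 - Real.exp (-ρ)) (by linarith) (by linarith)
    simpa using this
  have hterm : ∀ i : ℕ, (2:ℝ)^(-(i:ℤ)) * p₀ * Qst i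
      = (1 - Real.exp (-ρ))^i * (ρ * Real.exp (-ρ)) := by
    intro i
    have h2 : (2:ℝ)^(-(i:ℤ)) = ((2:ℝ)⁻¹)^i := by
      rw [zpow_neg, zpow_natCast, inv_pow]
    have h2i : ((2:ℝ)⁻¹ * (2 * (1 - Real.exp (-ρ))))^i = (1 - Real.exp (-ρ))^i := by
      rw [show (2:ℝ)⁻¹ * (2 * (1 - Real.exp (-ρ))) = 1 - Real.exp (-ρ) by ring]
    rw [hQst, h2, ← h2i, mul_pow]
    field_simp
    rw [← mul_pow, ← mul_pow]; congr 1; ring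
  have hrhost : (∑' i : ℕ, (2:ℝ)^(-(i:ℤ)) * p₀ * Qst i) = ρ := by
    have h1 : HasSum (fun i : ℕ => (2:ℝ)^(-(i:ℤ)) * p₀ * Qst i)
        ((Real.exp (-ρ))⁻¹ * (ρ * Real.exp (-ρ))) := by
      rw [show (fun i : ℕ => (2:ℝ)^(-(i:ℤ)) * p₀ * Qst i)
          = fun i => (1 - Real.exp (-ρ))^i * (ρ * Real.exp (-ρ)) from funext hterm]
      exact hgeo.mul_right _
    rw [h1.tsum_eq]
    field_simp
  have hQ2 : ∀ n, Qst n = (2 * (1 - Real.exp (-ρ)))^n * (2 * Real.exp (-ρ) - 1) := by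
    intro n; rw [hQst, hc]
  have hr0 : (0:ℝ) ≤ 2 * (1 - Real.exp (-ρ)) := by linarith
  have hr1 : 2 * (1 - Real.exp (-ρ)) < 1 := by linarith
  have hQstsum : HasSum Qst 1 := by
    have h1 : HasSum Qst ((1 - 2 * (1 - Real.exp (-ρ)))⁻¹ * (2 * Real.exp (-ρ) - 1)) := by
      rw [show Qst = fun n => (2 * (1 - Real.exp (-ρ)))^n * (2 * Real.exp (-ρ) - 1)
          from funext hQ2]
      exact (hasSum_geometric_of_lt_one hr0 hr1).mul_right _
    have heq : (1 - 2 * (1 - Real.exp (-ρ)))⁻¹ * (2 * Real.exp (-ρ) - 1) = 1 := by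
      rw [show (1 - 2 * (1 - Real.exp (-ρ))) = 2 * Real.exp (-ρ) - 1 by ring]
      exact inv_mul_cancel₀ (by linarith)
    rwa [heq] at h1
  constructor
  · refine ⟨fun n => ?_, hQstsum, ?_, ?_⟩
    · rw [hQ2]; exact mul_nonneg (pow_nonneg hr0 n) (by linarith)
    · -- first stationary equation
      intro n hn
      obtain ⟨m, rfl⟩ := Nat.exists_eq_add_of_le hn
      rw [hrhost]
      have e0 : 1 + m - 1 = m := by omega
      rw [e0, hQst m, hQst (1+m)]
      have e1 : ((1:ℤ) - ((1+m:ℕ):ℤ)) = -(m:ℤ) := by push_cast; ring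
      have e2 : (-((1+m:ℕ):ℤ)) = -(m:ℤ) + (-1) := by push_cast; ring
      rw [e1, e2, zpow_add₀ (two_ne_zero), pow_add]
      field_simp
    · -- second stationary equation
      rw [hrhost, hQst 0]
      field_simp
  · -- uniqueness
    intro Q hQpos hQsum hQeq
    obtain ⟨heq1, heq2⟩ := hQeq
    set σ := ∑' i : ℕ, (2:ℝ)^(-(i:ℤ)) * p₀ * Q i with hσdef
    have hσ0 : 0 ≤ σ := tsum_nonneg fun i =>
      mul_nonneg (mul_nonneg (by positivity) hp₀.le) (hQpos i)
    have hrec : ∀ m : ℕ, Q (m+1) = 2 * (1 - Real.exp (-σ)) * Q m := by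
      intro m
      have h := heq1 (m+1) (by omega)
      simp only [Nat.add_sub_cancel] at h
      have e1 : ((1:ℤ) - ((m+1:ℕ):ℤ)) = -(m:ℤ) := by push_cast; ring
      have e2 : (-((m+1:ℕ):ℤ)) = -(m:ℤ) + (-1) := by push_cast; ring
      rw [e1, e2, zpow_add₀ (two_ne_zero)] at h
      have h2m : ((2:ℝ)^(-(m:ℤ))) ≠ 0 := by positivity
      have h2m1 : ((2:ℝ)^(-1:ℤ)) = 2⁻¹ := by norm_num
      rw [h2m1] at h
      field_simp at h
      have h' : (p₀ * (Q m * (1 - Real.exp (-σ)) * 2)) * 2^m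
          = (p₀ * Q (m+1)) * 2^m := by linear_combination (p₀ * 2^m) * h
      have h2 := mul_right_cancel₀ (pow_ne_zero m (two_ne_zero (α := ℝ))) h'
      have h3 := mul_left_cancel₀ hp₀.ne' h2
      linear_combination -h3
    have hσe : Real.exp σ * Real.exp (-σ) = 1 := by
      rw [← Real.exp_add, add_neg_cancel, Real.exp_zero]
    rcases eq_or_lt_of_le hσ0 with hσz | hσpos
    · -- σ = 0 : contradiction
      exfalso
      rw [← hσz] at heq2
      simp only [zero_mul] at heq2
      have hQ0 : Q 0 = 0 := by
        rcases mul_eq_zero.mp heq2.symm with h | h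
        · exact absurd h hp₀.ne'
        · exact h
      have hall : ∀ n, Q n = 0 := by
        intro n
        induction n with
        | zero => exact hQ0
        | succ m ih => rw [hrec m, ih, ← hσz]; simp
      have h0 : HasSum (fun _ : ℕ => (0:ℝ)) 1 := by
        have := hQsum
        rwa [show Q = fun _ => (0:ℝ) from funext hall] at this
      exact one_ne_zero (h0.unique hasSum_zero)
    · -- σ > 0
      have hes1 : Real.exp (-σ) < 1 := Real.exp_lt_one_iff.2 (by linarith)
      have hes0 : 0 < Real.exp (-σ) := Real.exp_pos _
      have hQ0pos : 0 < Q 0 := by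
        have hpos : 0 < σ * Real.exp (-σ) := mul_pos hσpos hes0
        rw [heq2] at hpos
        nlinarith [hQpos 0]
      have hQn : ∀ n, Q n = (2 * (1 - Real.exp (-σ)))^n * Q 0 := by
        intro n
        induction n with
        | zero => simp
        | succ m ih => rw [hrec m, ih, pow_succ]; ring
      have hrb0 : (0:ℝ) ≤ 2 * (1 - Real.exp (-σ)) := by linarith
      have hsummable : Summable (fun n : ℕ => (2 * (1 - Real.exp (-σ)))^n) := by
        have h1 : Summable Q := hQsum.summable
        rw [show Q = fun n => (2 * (1 - Real.exp (-σ)))^n * Q 0 from funext hQn] at h1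
        exact (summable_mul_right_iff hQ0pos.ne').mp h1
      have hrb1 : 2 * (1 - Real.exp (-σ)) < 1 := by
        have hn := summable_geometric_iff_norm_lt_one.mp hsummable
        rwa [Real.norm_eq_abs, abs_of_nonneg hrb0] at hn
      have hQ0val : Q 0 = 2 * Real.exp (-σ) - 1 := by
        have h1 : HasSum (fun n : ℕ => (2 * (1 - Real.exp (-σ)))^n * Q 0)
            ((1 - 2 * (1 - Real.exp (-σ)))⁻¹ * Q 0) :=
          (hasSum_geometric_of_lt_one hrb0 hrb1).mul_right _
        have hfun : Q = fun n => (2 * (1 - Real.exp (-σ)))^n * Q 0 := funext hQn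
        have h1' : HasSum Q ((1 - 2 * (1 - Real.exp (-σ)))⁻¹ * Q 0) := by
          nth_rewrite 1 [hfun]
          exact h1
        have h2 := hQsum.unique h1'
        have h3 : (0:ℝ) < 1 - 2 * (1 - Real.exp (-σ)) := by linarith
        field_simp at h2
        linarith
      have hσfix : p₀ * (2 - Real.exp σ) = σ := by
        have hA : p₀ * (2 * Real.exp (-σ) - 1) = σ * Real.exp (-σ) := by
          rw [← hQ0val]; linarith [heq2]
        linear_combination Real.exp σ * hA + (σ - 2*p₀) * hσe
      have hρσ : σ = ρ := by
        rcases lt_trichotomy ρ σ with h | h | h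
        · exfalso
          have hx := Real.exp_lt_exp.2 h
          nlinarith
        · exact h.symm
        · exfalso
          have hx := Real.exp_lt_exp.2 h
          nlinarith
      funext n
      rw [hQn n, hQ0val, hρσ, hQ2 n]
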